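/- Let ρ_j (j ∈ ℤ₊) be positive integers and ψ^m_j ∈ L₂ for m = 1,…,ρ_j. If the family Ψ = {S^k_j ψ^m_j : j ∈ ℤ₊, m = 1,…,ρ_j, k ∈ R_j} forms a Parseval wavelet frame in L₂, then Σ_{j=0}^∞ Σ_{m=1}^{ρ_j} 2^j |ψ̂^m_j(n)|² = 1 for every n ∈ ℤ. -/

import Mathlib

open MeasureTheory Complex Finset Filter ComplexConjugate

noncomputable section

instance : Fact ((0:ℝ) < 1) := ⟨one_pos⟩

/-- The space `L₂` of 1-periodic square-integrable complex functions, realized as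
`Lp ℂ 2` over the additive circle of length 1 with normalized Haar measure. -/
abbrev PL2 : Type := Lp ℂ 2 (@AddCircle.haarAddCircle (1 : ℝ) _)

/-- Fourier coefficient `f̂(n) = ∫₀¹ f(x) e^{-2πinx} dx`. -/
def fCoeff (f : PL2) (n : ℤ) : ℂ := fourierCoeff (f : AddCircle (1 : ℝ) → ℂ) n

/-- Inner product `⟨f, S^k_j g⟩ = ∫₀¹ f(x) conj(g(x + 2^{-j} k)) dx`. -/
def shiftInner (f g : PL2) (j : ℕ) (k : ℤ) : ℂ :=
  ∫ x : AddCircle (1 : ℝ),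
    f x * conj (g (x + (((2:ℝ)^(-(j:ℤ)) * (k:ℝ) : ℝ) : AddCircle (1 : ℝ))))
    ∂AddCircle.haarAddCircle

/-- `R_j = {-2^{j-1}+1, …, 2^{j-1}}` for `j ≥ 1` and `R₀ = {0}`. -/
def Rset (j : ℕ) : Finset ℤ :=
  if j = 0 then {0} else Finset.Icc (-(2^(j-1) : ℤ) + 1) (2^(j-1))

/-- The system `{S^k_j ψ^m_j : j ∈ ℤ₊, 1 ≤ m ≤ ρ_j, k ∈ R_j}` is a Parseval wavelet frame. -/
def IsParsevalFrame (ρ : ℕ → ℕ) (ψ : ℕ → ℕ → PL2) : Prop :=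
  ∀ f : PL2, ‖f‖^2 =
    ∑' j : ℕ, ∑ m ∈ Finset.Icc 1 (ρ j), ∑ k ∈ Rset j,
      (‖shiftInner f (ψ j m) j k‖)^2

lemma Rset_card (j : ℕ) : (Rset j).card = 2^j := by
  unfold Rset
  rcases Nat.eq_zero_or_pos j with h | h
  · simp [h]
  · rw [if_neg h.ne', Int.card_Icc]
    obtain ⟨i, rfl⟩ : ∃ i, j = i + 1 := ⟨j - 1, (Nat.succ_pred_eq_of_pos h).symm⟩
    have h2 : (2:ℤ)^(i+1-1) + 1 - (-(2^(i+1-1) : ℤ) + 1) = 2^(i+1) := by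
      simp only [Nat.add_sub_cancel, pow_succ]; ring
    rw [h2]
    exact_mod_cast Int.toNat_natCast (2^(i+1))

lemma fourier_pt_add (n : ℤ) (x y : AddCircle (1:ℝ)) :
    fourier n (x + y) = fourier n x * fourier n y := by
  simp only [fourier_apply, smul_add, AddCircle.toCircle_add, Circle.coe_mul]

lemma abs_fourier' (n : ℤ) (x : AddCircle (1:ℝ)) : ‖fourier n x‖ = 1 :=
  Circle.norm_coe _

lemma shiftInner_fourierLp (g : PL2) (n : ℤ) (j : ℕ) (k : ℤ) :
    ‖shiftInner (fourierLp 2 n) g j k‖ = ‖fCoeff g n‖ := by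
  set a : AddCircle (1:ℝ) := (((2:ℝ)^(-(j:ℤ)) * (k:ℝ) : ℝ) : AddCircle (1:ℝ)) with ha
  have h1 : shiftInner (fourierLp 2 n) g j k
      = ∫ x : AddCircle (1:ℝ), fourier n x * conj ((g : AddCircle (1:ℝ) → ℂ) (x + a))
          ∂AddCircle.haarAddCircle := by
    unfold shiftInner
    refine integral_congr_ae ?_
    filter_upwards [coeFn_fourierLp 2 n] with x hx
    rw [hx]
  have h2 : (∫ x : AddCircle (1:ℝ), fourier n x * conj ((g : AddCircle (1:ℝ) → ℂ) (x + a))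
          ∂AddCircle.haarAddCircle)
      = ∫ x : AddCircle (1:ℝ), fourier n (x + (-a)) * conj ((g : AddCircle (1:ℝ) → ℂ) x)
          ∂AddCircle.haarAddCircle := by
    rw [← integral_add_right_eq_self
      (fun x => fourier n (x + (-a)) * conj ((g : AddCircle (1:ℝ) → ℂ) x)) a]
    simp
  have h3 : (∫ x : AddCircle (1:ℝ), fourier n (x + (-a)) * conj ((g : AddCircle (1:ℝ) → ℂ) x)
          ∂AddCircle.haarAddCircle)
      = fourier n (-a) * ∫ x : AddCircle (1:ℝ), fourier n x * conj ((g : AddCircle (1:ℝ) → ℂ) x)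
          ∂AddCircle.haarAddCircle := by
    rw [← integral_const_mul]
    congr 1; funext x
    rw [fourier_pt_add]; ring
  have h4 : (∫ x : AddCircle (1:ℝ), fourier n x * conj ((g : AddCircle (1:ℝ) → ℂ) x)
          ∂AddCircle.haarAddCircle) = conj (fCoeff g n) := by
    rw [fCoeff, fourierCoeff, ← integral_conj]
    congr 1; funext x
    rw [smul_eq_mul, map_mul, ← fourier_neg, neg_neg]
  rw [h1, h2, h3, h4, norm_mul, abs_fourier', one_mul, Complex.norm_conj]

lemma norm_fourierLp_two (n : ℤ) : ‖(fourierLp (T := 1) 2 n : PL2)‖ = 1 := by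
  have h := (@fourierBasis 1 _).orthonormal.1 n
  rwa [coe_fourierBasis] at h

theorem parseval_frame_necessity_first
    (ρ : ℕ → ℕ) (hρ : ∀ j, 0 < ρ j) (ψ : ℕ → ℕ → PL2)
    (hframe : IsParsevalFrame ρ ψ) :
    ∀ n : ℤ,
      ∑' j : ℕ, ∑ m ∈ Finset.Icc 1 (ρ j),
        (2:ℝ)^j * (‖fCoeff (ψ j m) n‖)^2 = 1 := by
  intro n
  have h := hframe (fourierLp 2 n)
  rw [norm_fourierLp_two, one_pow] at h
  rw [h]
  refine tsum_congr fun j => Finset.sum_congr rfl fun m _ => ?_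
  have hk : ∀ k ∈ Rset j,
      (‖shiftInner (fourierLp 2 n) (ψ j m) j k‖)^2
        = (‖fCoeff (ψ j m) n‖)^2 := fun k _ => by
    rw [shiftInner_fourierLp]
  rw [Finset.sum_congr rfl hk, Finset.sum_const, Rset_card, nsmul_eq_mul]
  push_cast
  ring

end
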